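/- Let $p > 1$ and $\beta \ge 1$. For all real numbers $a, b \ge 0$, one has $|a-b|^{p-2}(a-b)(a^\beta - b^\beta) \ge \beta \left(\frac{p}{p+\beta-1}\right)^p \left| a^{\frac{\beta+p-1}{p}} - b^{\frac{\beta+p-1}{p}} \right|^p$. -/

import Mathlib

open Real MeasureTheory

lemma holder_key {p β a b : ℝ} (hp : 1 < p) (hβ : 1 ≤ β)
    (hb : 0 ≤ b) (hab : b ≤ a) :
    (a ^ ((β + p - 1) / p) - b ^ ((β + p - 1) / p)) ^ p ≤
      ((β + p - 1) / p) ^ p * ((a - b) ^ (p - 1) * ((a ^ β - b ^ β) / β)) := by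
  have hp0 : 0 < p := by linarith
  have hβ0 : 0 < β := by linarith
  have ha : 0 ≤ a := le_trans hb hab
  set γ : ℝ := (β + p - 1) / p with hγdef
  have hγpos : 0 < γ := div_pos (by linarith) hp0
  have hγ1 : 0 ≤ γ - 1 := by
    rw [hγdef, sub_nonneg, le_div_iff₀ hp0]; linarith
  have hγβ : (γ - 1) * p = β - 1 := by
    rw [hγdef]; field_simp; ring
  have hμfin : IsFiniteMeasure (volume.restrict (Set.Ioc b a)) :=
    ⟨by rw [Measure.restrict_apply_univ]; exact measure_Ioc_lt_top⟩
  have hq : p.HolderConjugate (p / (p - 1)) := Real.HolderConjugate.conjExponent hp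
  have hmeas : AEStronglyMeasurable (fun t : ℝ => t ^ (γ - 1))
      (volume.restrict (Set.Ioc b a)) :=
    (Real.continuous_rpow_const hγ1).aestronglyMeasurable
  have hfmem : MemLp (fun t : ℝ => t ^ (γ - 1)) (ENNReal.ofReal p)
      (volume.restrict (Set.Ioc b a)) := by
    refine MemLp.of_bound hmeas (a ^ (γ - 1)) ?_
    refine (ae_restrict_iff' measurableSet_Ioc).2 (Filter.Eventually.of_forall ?_)
    intro t ht
    rw [Real.norm_of_nonneg (Real.rpow_nonneg (le_trans hb ht.1.le) _)]
    exact Real.rpow_le_rpow (le_trans hb ht.1.le) ht.2 hγ1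
  have hgmem : MemLp (fun _ : ℝ => (1 : ℝ)) (ENNReal.ofReal (p / (p - 1)))
      (volume.restrict (Set.Ioc b a)) := memLp_const 1
  have hf_nonneg : 0 ≤ᵐ[volume.restrict (Set.Ioc b a)] fun t : ℝ => t ^ (γ - 1) := by
    refine (ae_restrict_iff' measurableSet_Ioc).2 (Filter.Eventually.of_forall ?_)
    intro t ht
    exact Real.rpow_nonneg (le_trans hb ht.1.le) _
  have holder := integral_mul_le_Lp_mul_Lq_of_nonneg hq hf_nonneg
    (Filter.Eventually.of_forall fun _ => zero_le_one) hfmem hgmem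
  have hIoc : ∀ r : ℝ, -1 < r →
      ∫ t in Set.Ioc b a, t ^ r = (a ^ (r + 1) - b ^ (r + 1)) / (r + 1) := by
    intro r hr
    rw [← intervalIntegral.integral_of_le hab]
    exact integral_rpow (Or.inl hr)
  have hI1 : ∫ t in Set.Ioc b a, t ^ (γ - 1) * 1 = (a ^ γ - b ^ γ) / γ := by
    simp only [mul_one]
    have := hIoc (γ - 1) (by linarith)
    rwa [sub_add_cancel] at this
  have hI2 : ∫ t in Set.Ioc b a, (t ^ (γ - 1)) ^ p = (a ^ β - b ^ β) / β := by
    have hcongr : ∫ t in Set.Ioc b a, (t ^ (γ - 1)) ^ p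
        = ∫ t in Set.Ioc b a, t ^ (β - 1) := by
      refine setIntegral_congr_fun measurableSet_Ioc ?_
      intro t ht
      show (t ^ (γ - 1)) ^ p = t ^ (β - 1)
      rw [← Real.rpow_mul (le_trans hb ht.1.le), hγβ]
    rw [hcongr]
    have := hIoc (β - 1) (by linarith)
    rwa [sub_add_cancel] at this
  have hI3 : ∫ _t in Set.Ioc b a, (1 : ℝ) ^ (p / (p - 1)) = a - b := by
    simp only [Real.one_rpow]
    rw [setIntegral_const, Real.volume_real_Ioc, smul_eq_mul, mul_one,
      max_eq_left (by linarith)]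
  rw [hI1, hI2, hI3] at holder
  -- now raise to the p-th power
  have hX : 0 ≤ (a ^ β - b ^ β) / β :=
    div_nonneg (sub_nonneg.2 (Real.rpow_le_rpow hb hab hβ0.le)) hβ0.le
  have hY : 0 ≤ a - b := sub_nonneg.2 hab
  have hL : 0 ≤ (a ^ γ - b ^ γ) / γ :=
    div_nonneg (sub_nonneg.2 (Real.rpow_le_rpow hb hab hγpos.le)) hγpos.le
  have hpow := Real.rpow_le_rpow hL holder hp0.le
  rw [Real.div_rpow (sub_nonneg.2 (Real.rpow_le_rpow hb hab hγpos.le)) hγpos.le,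
    Real.mul_rpow (Real.rpow_nonneg hX _) (Real.rpow_nonneg hY _)] at hpow
  have e1 : (((a ^ β - b ^ β) / β) ^ (1 / p)) ^ p = (a ^ β - b ^ β) / β := by
    rw [← Real.rpow_mul hX, one_div_mul_cancel hp0.ne', Real.rpow_one]
  have e2 : ((a - b) ^ (1 / (p / (p - 1)))) ^ p = (a - b) ^ (p - 1) := by
    rw [← Real.rpow_mul hY]
    congr 1
    field_simp
  rw [e1, e2, div_le_iff₀ (by positivity : (0:ℝ) < γ ^ p)] at hpow
  exact hpow.trans_eq (by ring)

lemma power_inequality_aux {p β a b : ℝ} (hp : 1 < p) (hβ : 1 ≤ β)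
    (hb : 0 ≤ b) (hab : b ≤ a) :
    |a - b| ^ (p - 2) * (a - b) * (a ^ β - b ^ β) ≥
      β * (p / (p + β - 1)) ^ p *
        |a ^ ((β + p - 1) / p) - b ^ ((β + p - 1) / p)| ^ p := by
  have hp0 : 0 < p := by linarith
  have hβ0 : 0 < β := by linarith
  rcases eq_or_lt_of_le hab with heq | hlt
  · subst heq
    simp [Real.zero_rpow hp0.ne']
  · have hsub : 0 < a - b := sub_pos.2 hlt
    set γ : ℝ := (β + p - 1) / p with hγdef
    have hγpos : 0 < γ := div_pos (by linarith) hp0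
    have habsγ : |a ^ γ - b ^ γ| = a ^ γ - b ^ γ :=
      abs_of_nonneg (sub_nonneg.2 (Real.rpow_le_rpow hb hab hγpos.le))
    rw [habsγ, abs_of_pos hsub]
    have hL : (a - b) ^ (p - 2) * (a - b) = (a - b) ^ (p - 1) := by
      nth_rewrite 2 [← Real.rpow_one (a - b)]
      rw [← Real.rpow_add hsub]
      ring_nf
    rw [hL]
    have key := holder_key hp hβ hb hab
    have hpβ : (0:ℝ) < p + β - 1 := by linarith
    have hone : (p / (p + β - 1)) ^ p * γ ^ p = 1 := by
      rw [← Real.mul_rpow (div_nonneg hp0.le hpβ.le) hγpos.le,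
        show p / (p + β - 1) * γ = 1 by rw [hγdef]; field_simp [hpβ.ne']; ring,
        Real.one_rpow]
    calc β * (p / (p + β - 1)) ^ p * (a ^ γ - b ^ γ) ^ p
        ≤ β * (p / (p + β - 1)) ^ p * (γ ^ p * ((a - b) ^ (p - 1) * ((a ^ β - b ^ β) / β))) := by
          exact mul_le_mul_of_nonneg_left key
            (mul_nonneg hβ0.le (Real.rpow_nonneg (div_nonneg hp0.le hpβ.le) p))
      _ = ((p / (p + β - 1)) ^ p * γ ^ p) * ((a - b) ^ (p - 1) * (a ^ β - b ^ β)) * (β / β) := by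
          ring
      _ = (a - b) ^ (p - 1) * (a ^ β - b ^ β) := by
          rw [hone, div_self hβ0.ne', one_mul, mul_one]

theorem power_inequality (p β a b : ℝ) (hp : 1 < p) (hβ : 1 ≤ β)
    (ha : 0 ≤ a) (hb : 0 ≤ b) :
    |a - b| ^ (p - 2) * (a - b) * (a ^ β - b ^ β) ≥
      β * (p / (p + β - 1)) ^ p *
        |a ^ ((β + p - 1) / p) - b ^ ((β + p - 1) / p)| ^ p := by
  rcases le_total b a with hab | hab
  · exact power_inequality_aux hp hβ hb hab
  · have H := power_inequality_aux hp hβ ha hab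
    calc β * (p / (p + β - 1)) ^ p * |a ^ ((β + p - 1) / p) - b ^ ((β + p - 1) / p)| ^ p
        = β * (p / (p + β - 1)) ^ p * |b ^ ((β + p - 1) / p) - a ^ ((β + p - 1) / p)| ^ p := by
          rw [abs_sub_comm]
      _ ≤ |b - a| ^ (p - 2) * (b - a) * (b ^ β - a ^ β) := H
      _ = |a - b| ^ (p - 2) * (a - b) * (a ^ β - b ^ β) := by
          rw [abs_sub_comm]; ring
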